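/- Let (D, ≤, u) be a dimension group of rank at least 3 and Φ an order-preserving automorphism with Φ(u) = u such that Φ(d) + d ∈ ℚu for all d. Then a contradiction follows; i.e., no such Φ exists. -/

import Mathlib

/-- `q • u ≥ d` for a rational `q`, interpreted by clearing denominators: for every
representation `q = a / b` with `b > 0` we have `b • d ≤ a • u`. -/
def ratGe {D : Type*} [AddCommGroup D] [PartialOrder D] (u d : D) (q : ℚ) : Prop :=
  ∀ a b : ℤ, 0 < b → q = (a : ℚ) / (b : ℚ) → b • d ≤ a • u

/-- `q • u ≤ d` for a rational `q`, interpreted by clearing denominators. -/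
def ratLe {D : Type*} [AddCommGroup D] [PartialOrder D] (u d : D) (q : ℚ) : Prop :=
  ∀ a b : ℤ, 0 < b → q = (a : ℚ) / (b : ℚ) → a • u ≤ b • d

/-- A dimension group: a countable partially ordered abelian group (translation
invariant order) with order unit `u`, in which every finite subset is contained in a
subgroup order-isomorphic to a finite direct power of `(ℤ, ≤)`. -/
structure IsDimensionGroup (D : Type*) [AddCommGroup D] [PartialOrder D] (u : D) : Prop where
  add_le_add : ∀ a b c : D, a ≤ b → a + c ≤ b + c
  countable : Countable D
  unit_nonneg : 0 ≤ u
  unit_arch : ∀ x : D, ∃ n : ℕ, 0 < n ∧ x ≤ (n : ℤ) • u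
  locallyZ : ∀ s : Finset D, ∃ (k : ℕ) (S : AddSubgroup D) (e : S ≃+ (Fin k → ℤ)),
    (∀ x ∈ s, x ∈ S) ∧ ∀ a b : S, a ≤ b ↔ e a ≤ e b
set_option maxHeartbeats 1000000 in
/-- There is no order-preserving automorphism `Φ` of a dimension
group of rank at least 3 with `Φ u = u` and `Φ d + d ∈ ℚu` for all `d`. -/
theorem stmt18 {D : Type*} [AddCommGroup D] [PartialOrder D] (u : D)
    (h : IsDimensionGroup D u)
    (hrank : ∃ f : Fin 3 → D, LinearIndependent ℤ f)
    (Φ : D ≃+ D) (hord : ∀ x y : D, x ≤ y ↔ Φ x ≤ Φ y)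
    (hΦu : Φ u = u)
    (hQu : ∀ d : D, ∃ a b : ℤ, 0 < b ∧ b • (Φ d + d) = a • u) :
    False := by
  classical
  obtain ⟨f, hf⟩ := hrank
  obtain ⟨k, S, e, hmem, heq⟩ := h.locallyZ {u, f 0, f 1, f 2}
  have huS : u ∈ S := hmem u (by simp)
  have hfS : ∀ i : Fin 3, f i ∈ S := fun i => hmem (f i) (by fin_cases i <;> simp)
  -- rank: k ≥ 3
  have hk : 3 ≤ k := by
    set φ : (Fin k → ℤ) →ₗ[ℤ] D :=
      (S.subtype.toIntLinearMap).comp (e.symm.toIntLinearEquiv.toLinearMap) with hφ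
    have hg : LinearIndependent ℤ (fun i : Fin 3 => e ⟨f i, hfS i⟩) := by
      apply LinearIndependent.of_comp φ
      have : (⇑φ ∘ fun i : Fin 3 => e ⟨f i, hfS i⟩) = f := by
        funext i; simp [hφ]
      rw [this]; exact hf
    have := hg.fintype_card_le_finrank
    simpa [Module.finrank_fintype_fun_eq_card] using this
  -- order basics
  have hle : ∀ x y : D, x ≤ y ↔ 0 ≤ y - x := by
    intro x y
    constructor
    · intro hxy
      have := h.add_le_add x y (-x) hxy
      simpa [sub_eq_add_neg] using this
    · intro hxy
      have := h.add_le_add 0 (y - x) x hxy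
      simpa using this
  have haddpos : ∀ x y : D, 0 ≤ x → 0 ≤ y → 0 ≤ x + y := by
    intro x y hx hy
    calc (0:D) ≤ y := hy
      _ = 0 + y := (zero_add y).symm
      _ ≤ x + y := h.add_le_add 0 x y hx
  have hsmulpos : ∀ (c : ℤ), 0 ≤ c → ∀ x : D, 0 ≤ x → 0 ≤ c • x := by
    intro c hc x hx
    have hn : ∀ n : ℕ, 0 ≤ (n : ℤ) • x := by
      intro n
      induction n with
      | zero => simp
      | succ m ih =>
        have : ((m : ℤ) + 1) • x = (m : ℤ) • x + x := by
          rw [add_zsmul, one_zsmul]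
        rw [Nat.cast_add, Nat.cast_one, this]
        exact haddpos _ _ ih hx
    have := hn c.toNat
    rwa [Int.toNat_of_nonneg hc] at this
  -- coordinates
  have hcoordS : ∀ (x y : D) (hx : x ∈ S) (hy : y ∈ S),
      x ≤ y ↔ ∀ i, e ⟨x, hx⟩ i ≤ e ⟨y, hy⟩ i := by
    intro x y hx hy
    constructor
    · intro hxy i
      exact (heq ⟨x, hx⟩ ⟨y, hy⟩).1 (Subtype.mk_le_mk.2 hxy) i
    · intro hi
      exact Subtype.mk_le_mk.1 ((heq _ _).2 (Pi.le_def.2 hi))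
  have hesmul : ∀ (x : D) (hx : x ∈ S) (c : ℤ) (hcx : c • x ∈ S),
      e ⟨c • x, hcx⟩ = c • e ⟨x, hx⟩ := by
    intro x hx c hcx
    have h1 : (⟨c • x, hcx⟩ : S) = c • ⟨x, hx⟩ := Subtype.ext rfl
    rw [h1, map_zsmul]
  have hcmp : ∀ (x y : D) (hx : x ∈ S) (hy : y ∈ S) (c1 c2 : ℤ),
      c1 • x ≤ c2 • y ↔ ∀ i, c1 * (e ⟨x, hx⟩ i) ≤ c2 * (e ⟨y, hy⟩ i) := by
    intro x y hx hy c1 c2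
    rw [hcoordS _ _ (S.zsmul_mem hx c1) (S.zsmul_mem hy c2),
      hesmul x hx c1, hesmul y hy c2]
    simp [Pi.smul_apply, smul_eq_mul]
  set v : Fin k → ℤ := e ⟨u, huS⟩ with hvdef
  -- unit has positive coordinates
  have hv : ∀ i, 1 ≤ v i := by
    intro i
    obtain ⟨n, hn, hnx⟩ := h.unit_arch ((e.symm (Pi.single i 1) : S) : D)
    have hx : ((e.symm (Pi.single i 1) : S) : D) ∈ S := (e.symm (Pi.single i 1)).2
    have hnu : (n : ℤ) • u ∈ S := S.zsmul_mem huS _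
    have hco := (hcoordS _ _ hx hnu).1 hnx i
    have h1 : (⟨((e.symm (Pi.single i 1) : S) : D), hx⟩ : S) = e.symm (Pi.single i 1) :=
      Subtype.ext rfl
    rw [h1, e.apply_symm_apply, hesmul u huS] at hco
    simp [Pi.single_apply] at hco
    have hn' : 1 ≤ (n : ℤ) := by exact_mod_cast hn
    nlinarith [hco]
  have hv' : ∀ i, 1 ≤ e ⟨u, huS⟩ i := hv
  -- key comparison lemma
  have key : ∀ (d : D) (a' b' : ℤ), 0 < b' → b' • (Φ d + d) = a' • u →
      ∀ a b : ℤ, 0 < b →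
      ((b • d ≤ a • u → (a' * b - a * b') • u ≤ (b * b') • d) ∧
       ((a' * b - a * b') • u ≤ (b * b') • d → (b * b') • d ≤ (a * b') • u)) := by
    intro d a' b' hb' heqn a b hb
    have hT : b • (b' • (Φ d + d) - a' • u) = 0 := by rw [heqn]; simp
    constructor
    · intro hba
      have h1 : b • Φ d ≤ a • u := by
        have := (hord (b • d) (a • u)).1 hba
        rwa [map_zsmul, map_zsmul, hΦu] at this
      have h2 : 0 ≤ b' • (a • u - b • Φ d) :=
        hsmulpos b' hb'.le _ ((hle _ _).1 h1)
      rw [hle]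
      have hid : (b * b') • d - (a' * b - a * b') • u =
          b' • (a • u - b • Φ d) + b • (b' • (Φ d + d) - a' • u) := by module
      rw [hid, hT, add_zero]
      exact h2
    · intro h5
      have h6 : (b * b') • Φ d ≤ (a * b') • u := by
        rw [hle]
        have hid : (a * b') • u - (b * b') • Φ d =
            ((b * b') • d - (a' * b - a * b') • u) - b • (b' • (Φ d + d) - a' • u) := by
          module
        rw [hid, hT, sub_zero]
        exact (hle _ _).1 h5
      have h7 : Φ ((b * b') • d) ≤ Φ ((a * b') • u) := by
        rwa [map_zsmul, map_zsmul, hΦu]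
      exact (hord _ _).2 h7
  -- indices
  have hk0 : 0 < k := by omega
  have hk1 : 1 < k := by omega
  have hk2 : 2 < k := by omega
  set i0 : Fin k := ⟨0, hk0⟩
  set i1 : Fin k := ⟨1, hk1⟩
  set i2 : Fin k := ⟨2, hk2⟩
  have h01 : i1 ≠ i0 := by simp [i0, i1, Fin.ext_iff]
  have h02 : i2 ≠ i0 := by simp [i0, i2, Fin.ext_iff]
  have h12 : i2 ≠ i1 := by simp [i1, i2, Fin.ext_iff]
  have h01' : i0 ≠ i1 := Ne.symm h01
  -- basis elements
  set d1 : S := e.symm (Pi.single i0 1) with hd1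
  set d2 : S := e.symm (Pi.single i1 1) with hd2
  set D1 : D := (d1 : D) with hD1
  set D2 : D := (d2 : D) with hD2
  have h1S : D1 ∈ S := d1.2
  have h2S : D2 ∈ S := d2.2
  have h3S : D1 + D2 ∈ S := S.add_mem h1S h2S
  have hw1 : e ⟨D1, h1S⟩ = Pi.single i0 1 := by
    have : (⟨D1, h1S⟩ : S) = d1 := Subtype.ext rfl
    rw [this, hd1, e.apply_symm_apply]
  have hw2 : e ⟨D2, h2S⟩ = Pi.single i1 1 := by
    have : (⟨D2, h2S⟩ : S) = d2 := Subtype.ext rfl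
    rw [this, hd2, e.apply_symm_apply]
  have hw3 : e ⟨D1 + D2, h3S⟩ = Pi.single i0 1 + Pi.single i1 1 := by
    have : (⟨D1 + D2, h3S⟩ : S) = d1 + d2 := Subtype.ext rfl
    rw [this, map_add, hd1, hd2, e.apply_symm_apply, e.apply_symm_apply]
  obtain ⟨a1, b1, hb1, heq1⟩ := hQu D1
  obtain ⟨a2, b2, hb2, heq2⟩ := hQu D2
  obtain ⟨a3, b3, hb3, heq3⟩ := hQu (D1 + D2)
  have hv0 : 0 < v i0 := by linarith [hv i0]
  have hv1 : 0 < v i1 := by linarith [hv i1]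
  have hv2 : 0 < v i2 := by linarith [hv i2]
  -- Fact 1 : a1 * v i0 ≤ b1
  have fact1 : a1 * v i0 ≤ b1 := by
    have hyp : (v i0) • D1 ≤ (1:ℤ) • u := by
      rw [hcmp D1 u h1S huS, hw1]
      intro i
      by_cases hi : i = i0
      · subst hi; simp; exact le_rfl
      · simp [Pi.single_apply, hi]
        linarith [hv' i]
    have hconc := (key D1 a1 b1 hb1 heq1 1 (v i0) hv0).1 hyp
    rw [hcmp u D1 huS h1S, hw1] at hconc
    have := hconc i1
    rw [Pi.single_apply] at this
    simp [h01] at this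
    have h' : (a1 * v i0 - b1) * v i1 ≤ 0 * v i1 := by rw [zero_mul]; exact this
    have := le_of_mul_le_mul_right h' hv1
    linarith
  -- Fact 2 : b1 ≤ a1 * v i0
  have fact2 : b1 ≤ a1 * v i0 := by
    have hyp : (a1 * b1 - a1 * b1) • u ≤ (b1 * b1) • D1 := by
      rw [hcmp u D1 huS h1S, hw1]
      intro i
      rw [Pi.single_apply]
      have : (0:ℤ) ≤ b1 * b1 * (if i = i0 then 1 else 0) := by positivity
      linarith
    have hconc := (key D1 a1 b1 hb1 heq1 a1 b1 hb1).2 hyp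
    rw [hcmp D1 u h1S huS, hw1] at hconc
    have := hconc i0
    simp at this
    have h' : b1 * b1 ≤ (a1 * v i0) * b1 := by nlinarith
    exact le_of_mul_le_mul_right h' hb1
  -- Facts for d2
  have fact3 : a2 * v i1 ≤ b2 := by
    have hyp : (v i1) • D2 ≤ (1:ℤ) • u := by
      rw [hcmp D2 u h2S huS, hw2]
      intro i
      by_cases hi : i = i1
      · subst hi; simp; exact le_rfl
      · simp [Pi.single_apply, hi]
        linarith [hv' i]
    have hconc := (key D2 a2 b2 hb2 heq2 1 (v i1) hv1).1 hyp
    rw [hcmp u D2 huS h2S, hw2] at hconc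
    have := hconc i0
    rw [Pi.single_apply] at this
    simp [(Ne.symm h01 : i0 ≠ i1)] at this
    have h' : (a2 * v i1 - b2) * v i0 ≤ 0 * v i0 := by rw [zero_mul]; exact this
    have := le_of_mul_le_mul_right h' hv0
    linarith
  have fact4 : b2 ≤ a2 * v i1 := by
    have hyp : (a2 * b2 - a2 * b2) • u ≤ (b2 * b2) • D2 := by
      rw [hcmp u D2 huS h2S, hw2]
      intro i
      rw [Pi.single_apply]
      have : (0:ℤ) ≤ b2 * b2 * (if i = i1 then 1 else 0) := by positivity
      linarith
    have hconc := (key D2 a2 b2 hb2 heq2 a2 b2 hb2).2 hyp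
    rw [hcmp D2 u h2S huS, hw2] at hconc
    have := hconc i1
    simp at this
    have h' : b2 * b2 ≤ (a2 * v i1) * b2 := by nlinarith
    exact le_of_mul_le_mul_right h' hb2
  -- Fact 5 : a3 * min (v i0) (v i1) ≤ b3
  set m : ℤ := min (v i0) (v i1) with hm
  have hm0 : 0 < m := lt_min hv0 hv1
  have fact5 : a3 * m ≤ b3 := by
    have hyp : m • (D1 + D2) ≤ (1:ℤ) • u := by
      rw [hcmp (D1 + D2) u h3S huS, hw3]
      intro i
      rw [Pi.add_apply, Pi.single_apply, Pi.single_apply]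
      by_cases hi : i = i0
      · subst hi
        rw [if_pos rfl, if_neg h01']
        simp only [add_zero, mul_one, one_mul]
        exact min_le_left (v i0) (v i1)
      · by_cases hi' : i = i1
        · subst hi'
          rw [if_neg hi, if_pos rfl]
          simp only [zero_add, mul_one, one_mul]
          exact min_le_right (v i0) (v i1)
        · simp [hi, hi']
          linarith [hv' i]
    have hconc := (key (D1 + D2) a3 b3 hb3 heq3 1 m hm0).1 hyp
    rw [hcmp u (D1 + D2) huS h3S, hw3] at hconc
    have := hconc i2
    rw [Pi.add_apply, Pi.single_apply, Pi.single_apply, if_neg h02, if_neg h12] at this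
    have h' : (a3 * m - b3) * v i2 ≤ 0 * v i2 := by
      rw [zero_mul]
      have : (a3 * m - 1 * b3) * v i2 ≤ m * b3 * (0 + 0) := this
      simpa using this
    have := le_of_mul_le_mul_right h' hv2
    linarith
  -- additivity of q
  have hsplit : Φ (D1 + D2) + (D1 + D2) = (Φ D1 + D1) + (Φ D2 + D2) := by
    rw [map_add]; abel
  have hcomb : (b1 * b2) • (b3 • (Φ (D1 + D2) + (D1 + D2))) =
      (b2 * b3) • (b1 • (Φ D1 + D1)) + (b1 * b3) • (b2 • (Φ D2 + D2)) := by
    rw [hsplit]; module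
  rw [heq1, heq2, heq3] at hcomb
  have hC : (b1 * b2 * a3 - b2 * b3 * a1 - b1 * b3 * a2) • u = 0 := by
    have h9 : (b1 * b2 * a3 - b2 * b3 * a1 - b1 * b3 * a2) • u =
        (b1 * b2) • (a3 • u) - ((b2 * b3) • (a1 • u) + (b1 * b3) • (a2 • u)) := by
      module
    rw [h9, hcomb, sub_self]
  have hCmem : (b1 * b2 * a3 - b2 * b3 * a1 - b1 * b3 * a2) • u ∈ S :=
    S.zsmul_mem huS _
  have hC0 : (b1 * b2 * a3 - b2 * b3 * a1 - b1 * b3 * a2) * v i0 = 0 := by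
    have h10 : (⟨(b1 * b2 * a3 - b2 * b3 * a1 - b1 * b3 * a2) • u, hCmem⟩ : S) = 0 :=
      Subtype.ext hC
    have h11 := congrArg (fun z => e z i0) h10
    simp only [map_zero, Pi.zero_apply] at h11
    rw [hesmul u huS _ hCmem] at h11
    simpa using h11
  have hCeq : b1 * b2 * a3 = b2 * b3 * a1 + b1 * b3 * a2 := by
    have := mul_eq_zero.1 hC0
    rcases this with h' | h'
    · linarith
    · exfalso; linarith
  -- final contradiction
  have ha1 : 0 < a1 := by nlinarith
  have ha2 : 0 < a2 := by nlinarith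
  have ha3 : 0 < a3 := by
    by_contra hc
    push_neg at hc
    have hpos : 0 < b2 * b3 * a1 + b1 * b3 * a2 :=
      add_pos (mul_pos (mul_pos hb2 hb3) ha1) (mul_pos (mul_pos hb1 hb3) ha2)
    have hneg : b1 * b2 * a3 ≤ 0 :=
      mul_nonpos_of_nonneg_of_nonpos (le_of_lt (mul_pos hb1 hb2)) hc
    linarith
  have hb1e : b1 = a1 * v i0 := le_antisymm fact2 fact1
  have hb2e : b2 = a2 * v i1 := le_antisymm fact4 fact3
  have hmc := min_choice (v i0) (v i1)
  rw [hb1e, hb2e] at hCeq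
  have H1 : a1 * a2 * v i1 * (a3 * m) ≤ a1 * a2 * v i1 * b3 :=
    mul_le_mul_of_nonneg_left fact5 (le_of_lt (mul_pos (mul_pos ha1 ha2) hv1))
  have H2 : a1 * a2 * v i0 * (a3 * m) ≤ a1 * a2 * v i0 * b3 :=
    mul_le_mul_of_nonneg_left fact5 (le_of_lt (mul_pos (mul_pos ha1 ha2) hv0))
  rcases hmc with hme | hme <;> rw [hm, hme] at H1 H2 <;>
    nlinarith [H1, H2, hCeq, mul_pos (mul_pos ha1 ha2) (mul_pos ha3 (mul_pos hv0 hv1)),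
      mul_pos (mul_pos ha1 ha2) (mul_pos ha3 (mul_pos hv0 hv0)),
      mul_pos (mul_pos ha1 ha2) (mul_pos ha3 (mul_pos hv1 hv1))]
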